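/- Let n ≥ 2, a ∈ ℝ, ν ∈ ℝ, ε ∈ {0,1}, and fix y ∈ ℝ^{n-1}. Define the complex-valued function K on {x ∈ ℝⁿ : x_n ≠ 0} by K(x) = sgn(x_n)^ε |x_n|^{(1-a)/2 - iν} (|x'-y|² + x_n²)^{-((n-1)/2 - iν)}, where complex powers of positive reals are defined via the real logarithm and x = (x', x_n). Then Δ_a K(x) = −( ((1−a)/2)² + ν² ) K(x) for every x with x_n ≠ 0. -/

import Mathlib

/-- Directional derivative: `pd v u x = (fderiv ℝ u x) v`. -/
noncomputable def pd {E F : Type*} [NormedAddCommGroup E] [NormedSpace ℝ E]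
    [NormedAddCommGroup F] [NormedSpace ℝ F] (v : E) (u : E → F) (x : E) : F :=
  fderiv ℝ u x v

/-- The operator `Δ_a u = x_n² Δu + a x_n ∂u/∂x_n` on `ℝⁿ = ℝ^m × ℝ` (complex valued,
i.e. applied componentwise on real and imaginary parts). -/
noncomputable def deltaA (m : ℕ) (a : ℝ) (u : (Fin m → ℝ) × ℝ → ℂ)
    (x : (Fin m → ℝ) × ℝ) : ℂ :=
  ((x.2 ^ 2 : ℝ) : ℂ) *
      ((∑ j, pd (Pi.single j 1, (0 : ℝ)) (pd (Pi.single j 1, (0 : ℝ)) u) x)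
        + pd ((0 : Fin m → ℝ), (1 : ℝ)) (pd ((0 : Fin m → ℝ), (1 : ℝ)) u) x)
    + ((a * x.2 : ℝ) : ℂ) * pd ((0 : Fin m → ℝ), (1 : ℝ)) u x

/-- The kernel `K(x) = sgn(x_n)^ε |x_n|^{(1-a)/2 - iν} (|x'-y|² + x_n²)^{-((n-1)/2 - iν)}`,
complex powers of positive reals being defined via the real logarithm. -/
noncomputable def kerKnu (n : ℕ) (a ν : ℝ) (ε : ℕ) (y : Fin (n - 1) → ℝ)
    (x : (Fin (n - 1) → ℝ) × ℝ) : ℂ :=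
  ((Real.sign x.2 ^ ε : ℝ) : ℂ) *
    Complex.exp ((((1 - a) / 2 : ℝ) - (ν : ℂ) * Complex.I) * ((Real.log |x.2| : ℝ) : ℂ)) *
    Complex.exp ((-((((n : ℝ) - 1) / 2 : ℝ)) + (ν : ℂ) * Complex.I) *
      ((Real.log ((∑ j, (x.1 j - y j) ^ 2) + x.2 ^ 2) : ℝ) : ℂ))

open ContinuousLinearMap

noncomputable section Aux

variable {m : ℕ}

def QQ (y : Fin m → ℝ) (z : (Fin m → ℝ) × ℝ) : ℝ := (∑ j, (z.1 j - y j) ^ 2) + z.2 ^ 2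

def LQ (y : Fin m → ℝ) (z : (Fin m → ℝ) × ℝ) : ((Fin m → ℝ) × ℝ) →L[ℝ] ℝ :=
  (∑ j, (2 * (z.1 j - y j)) • ((ContinuousLinearMap.proj j).comp
    (ContinuousLinearMap.fst ℝ (Fin m → ℝ) ℝ)))
  + (2 * z.2) • ContinuousLinearMap.snd ℝ (Fin m → ℝ) ℝ

theorem hasFDerivAt_QQ (y : Fin m → ℝ) (z : (Fin m → ℝ) × ℝ) :
    HasFDerivAt (QQ y) (LQ y z) z := by
  have h1 : ∀ j : Fin m, HasFDerivAt (fun z : (Fin m → ℝ) × ℝ => (z.1 j - y j) ^ 2)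
      ((2 * (z.1 j - y j)) • ((ContinuousLinearMap.proj j).comp
        (ContinuousLinearMap.fst ℝ (Fin m → ℝ) ℝ))) z := by
    intro j
    have hl : HasFDerivAt (fun z : (Fin m → ℝ) × ℝ => z.1 j - y j)
        ((ContinuousLinearMap.proj j).comp (ContinuousLinearMap.fst ℝ (Fin m → ℝ) ℝ)) z :=
      (((ContinuousLinearMap.proj j).comp
        (ContinuousLinearMap.fst ℝ (Fin m → ℝ) ℝ)).hasFDerivAt).sub_const (y j)
    simpa [pow_two, two_mul, add_smul] using hl.fun_mul hl
  have h2 : HasFDerivAt (fun z : (Fin m → ℝ) × ℝ => z.2 ^ 2)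
      ((2 * z.2) • ContinuousLinearMap.snd ℝ (Fin m → ℝ) ℝ) z := by
    have hl : HasFDerivAt (fun z : (Fin m → ℝ) × ℝ => z.2)
        (ContinuousLinearMap.snd ℝ (Fin m → ℝ) ℝ) z :=
      (ContinuousLinearMap.snd ℝ (Fin m → ℝ) ℝ).hasFDerivAt
    simpa [pow_two, two_mul, add_smul] using hl.fun_mul hl
  exact (HasFDerivAt.fun_sum (fun j _ => h1 j)).fun_add h2

theorem LQ_apply_single (y : Fin m → ℝ) (z : (Fin m → ℝ) × ℝ) (j : Fin m) :
    LQ y z (Pi.single j 1, (0 : ℝ)) = 2 * (z.1 j - y j) := by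
  simp [LQ, ContinuousLinearMap.sum_apply, Pi.single_apply, Finset.sum_ite_eq']

theorem LQ_apply_e (y : Fin m → ℝ) (z : (Fin m → ℝ) × ℝ) :
    LQ y z ((0 : Fin m → ℝ), (1 : ℝ)) = 2 * z.2 := by
  simp [LQ, ContinuousLinearMap.sum_apply]

theorem QQ_pos (y : Fin m → ℝ) {z : (Fin m → ℝ) × ℝ} (hz : z.2 ≠ 0) : 0 < QQ y z := by
  have : 0 < z.2 ^ 2 := by positivity
  have h : 0 ≤ ∑ j, (z.1 j - y j) ^ 2 := Finset.sum_nonneg fun j _ => sq_nonneg _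
  unfold QQ; linarith

def K0 (α β : ℂ) (y : Fin m → ℝ) (z : (Fin m → ℝ) × ℝ) : ℂ :=
  Complex.exp (α * ((Real.log z.2 : ℝ) : ℂ)) * Complex.exp (β * ((Real.log (QQ y z) : ℝ) : ℂ))

def DK0 (α β : ℂ) (y : Fin m → ℝ) (z : (Fin m → ℝ) × ℝ) : ((Fin m → ℝ) × ℝ) →L[ℝ] ℂ :=
  K0 α β y z • ((α / (z.2 : ℂ)) • (Complex.ofRealCLM.comp (ContinuousLinearMap.snd ℝ (Fin m → ℝ) ℝ))
    + (β / ((QQ y z : ℝ) : ℂ)) • (Complex.ofRealCLM.comp (LQ y z)))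

theorem hasFDerivAt_K0 (α β : ℂ) (y : Fin m → ℝ) {z : (Fin m → ℝ) × ℝ} (hz : z.2 ≠ 0) :
    HasFDerivAt (K0 α β y) (DK0 α β y z) z := by
  have hQ : QQ y z ≠ 0 := (QQ_pos y hz).ne'
  have hlog1 : HasFDerivAt (fun z : (Fin m → ℝ) × ℝ => Real.log z.2)
      (z.2⁻¹ • ContinuousLinearMap.snd ℝ (Fin m → ℝ) ℝ) z :=
    (Real.hasDerivAt_log hz).comp_hasFDerivAt z
      (ContinuousLinearMap.snd ℝ (Fin m → ℝ) ℝ).hasFDerivAt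
  have hlog2 : HasFDerivAt (fun z : (Fin m → ℝ) × ℝ => Real.log (QQ y z))
      ((QQ y z)⁻¹ • LQ y z) z :=
    (Real.hasDerivAt_log hQ).comp_hasFDerivAt z (hasFDerivAt_QQ y z)
  have hc1 : HasFDerivAt (fun z : (Fin m → ℝ) × ℝ => α * ((Real.log z.2 : ℝ) : ℂ))
      (α • (Complex.ofRealCLM.comp (z.2⁻¹ • ContinuousLinearMap.snd ℝ (Fin m → ℝ) ℝ))) z :=
    (Complex.ofRealCLM.hasFDerivAt.comp z hlog1).const_mul α
  have hc2 : HasFDerivAt (fun z : (Fin m → ℝ) × ℝ => β * ((Real.log (QQ y z) : ℝ) : ℂ))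
      (β • (Complex.ofRealCLM.comp ((QQ y z)⁻¹ • LQ y z))) z :=
    (Complex.ofRealCLM.hasFDerivAt.comp z hlog2).const_mul β
  have h1 : HasFDerivAt (fun z : (Fin m → ℝ) × ℝ => Complex.exp (α * ((Real.log z.2 : ℝ) : ℂ)))
      (Complex.exp (α * ((Real.log z.2 : ℝ) : ℂ)) •
        (α • (Complex.ofRealCLM.comp (z.2⁻¹ • ContinuousLinearMap.snd ℝ (Fin m → ℝ) ℝ)))) z :=
    (Complex.hasDerivAt_exp _).comp_hasFDerivAt z hc1
  have h2 : HasFDerivAt (fun z : (Fin m → ℝ) × ℝ =>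
        Complex.exp (β * ((Real.log (QQ y z) : ℝ) : ℂ)))
      (Complex.exp (β * ((Real.log (QQ y z) : ℝ) : ℂ)) •
        (β • (Complex.ofRealCLM.comp ((QQ y z)⁻¹ • LQ y z)))) z :=
    (Complex.hasDerivAt_exp _).comp_hasFDerivAt z hc2
  have := h1.mul h2
  refine this.congr_fderiv (ContinuousLinearMap.ext fun v => ?_)
  simp only [DK0, K0, ContinuousLinearMap.add_apply, ContinuousLinearMap.smul_apply,
    ContinuousLinearMap.comp_apply, Complex.ofRealCLM_apply, smul_eq_mul,
    ContinuousLinearMap.coe_smul', Pi.smul_apply, Complex.ofReal_mul, Complex.real_smul,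
    Complex.ofReal_inv]
  field_simp
  ring


theorem pd_K0 (α β : ℂ) (y : Fin m → ℝ) {z : (Fin m → ℝ) × ℝ} (hz : z.2 ≠ 0)
    (v : (Fin m → ℝ) × ℝ) : pd v (K0 α β y) z = DK0 α β y z v := by
  rw [pd, (hasFDerivAt_K0 α β y hz).fderiv]

theorem pd_K0_single (α β : ℂ) (y : Fin m → ℝ) {z : (Fin m → ℝ) × ℝ} (hz : z.2 ≠ 0)
    (j : Fin m) : pd (Pi.single j 1, (0 : ℝ)) (K0 α β y) z
      = K0 α β y z * (2 * β * ((z.1 j - y j : ℝ) : ℂ) / ((QQ y z : ℝ) : ℂ)) := by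
  rw [pd_K0 α β y hz]
  simp only [DK0, ContinuousLinearMap.smul_apply, ContinuousLinearMap.add_apply,
    ContinuousLinearMap.comp_apply, Complex.ofRealCLM_apply, ContinuousLinearMap.coe_snd',
    smul_eq_mul, LQ_apply_single, Complex.ofReal_mul, Complex.ofReal_sub,
    Complex.ofReal_zero, Complex.ofReal_ofNat, mul_zero]
  ring

theorem pd_K0_e (α β : ℂ) (y : Fin m → ℝ) {z : (Fin m → ℝ) × ℝ} (hz : z.2 ≠ 0) :
    pd ((0 : Fin m → ℝ), (1 : ℝ)) (K0 α β y) z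
      = K0 α β y z * (α / (z.2 : ℂ) + 2 * β * (z.2 : ℂ) / ((QQ y z : ℝ) : ℂ)) := by
  rw [pd_K0 α β y hz]
  simp only [DK0, ContinuousLinearMap.smul_apply, ContinuousLinearMap.add_apply,
    ContinuousLinearMap.comp_apply, Complex.ofRealCLM_apply, ContinuousLinearMap.coe_snd',
    smul_eq_mul, LQ_apply_e, Complex.ofReal_mul, Complex.ofReal_one,
    Complex.ofReal_ofNat, mul_one]
  ring



section Second

variable (α β : ℂ) (y : Fin m → ℝ) {x : (Fin m → ℝ) × ℝ}

theorem isOpen_U : IsOpen {z : (Fin m → ℝ) × ℝ | z.2 ≠ 0} :=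
  isOpen_compl_singleton.preimage continuous_snd

theorem pd2_K0_single (hx : x.2 ≠ 0) (j : Fin m) :
    ∃ G : ((Fin m → ℝ) × ℝ) →L[ℝ] ℂ,
      HasFDerivAt (pd (Pi.single j 1, (0 : ℝ)) (K0 α β y)) G x ∧
      G (Pi.single j 1, (0 : ℝ))
      = K0 α β y x * ((4 * β ^ 2 * ((x.1 j - y j : ℝ) : ℂ) ^ 2
          + 2 * β * (((QQ y x : ℝ) : ℂ) - 2 * ((x.1 j - y j : ℝ) : ℂ) ^ 2))
            / ((QQ y x : ℝ) : ℂ) ^ 2) := by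
  have hQ : QQ y x ≠ 0 := (QQ_pos y hx).ne'
  set v : (Fin m → ℝ) × ℝ := (Pi.single j 1, (0 : ℝ)) with hv
  set g : (Fin m → ℝ) × ℝ → ℂ := fun z =>
    K0 α β y z * (2 * β) * (((z.1 j - y j) * (QQ y z)⁻¹ : ℝ) : ℂ) with hg
  have heq : pd v (K0 α β y) =ᶠ[nhds x] g := by
    filter_upwards [isOpen_U.mem_nhds hx] with z hz
    simp only [hg]
    rw [pd_K0_single α β y hz j]
    push_cast
    ring
  have hnum : HasFDerivAt (fun z : (Fin m → ℝ) × ℝ => z.1 j - y j)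
      ((ContinuousLinearMap.proj j).comp (ContinuousLinearMap.fst ℝ (Fin m → ℝ) ℝ)) x :=
    (((ContinuousLinearMap.proj j).comp
      (ContinuousLinearMap.fst ℝ (Fin m → ℝ) ℝ)).hasFDerivAt).sub_const (y j)
  have hinvQ : HasFDerivAt (fun z : (Fin m → ℝ) × ℝ => (QQ y z)⁻¹)
      ((-((QQ y x) ^ 2)⁻¹) • LQ y x) x :=
    (hasDerivAt_inv hQ).comp_hasFDerivAt x (hasFDerivAt_QQ y x)
  have hr := hnum.mul hinvQ
  have hφ : HasFDerivAt (fun z : (Fin m → ℝ) × ℝ => (((z.1 j - y j) * (QQ y z)⁻¹ : ℝ) : ℂ))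
      (Complex.ofRealCLM.comp ((x.1 j - y j) • ((-((QQ y x) ^ 2)⁻¹) • LQ y x)
        + (QQ y x)⁻¹ • ((ContinuousLinearMap.proj j).comp
            (ContinuousLinearMap.fst ℝ (Fin m → ℝ) ℝ)))) x :=
    Complex.ofRealCLM.hasFDerivAt.comp x hr
  have hK : HasFDerivAt (fun z : (Fin m → ℝ) × ℝ => K0 α β y z * (2 * β))
      ((2 * β) • DK0 α β y x) x := (hasFDerivAt_K0 α β y hx).mul_const (2 * β)
  have hgd := hK.mul hφ
  refine ⟨_, hgd.congr_of_eventuallyEq heq, ?_⟩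
  simp only [hv, DK0, ContinuousLinearMap.add_apply, ContinuousLinearMap.smul_apply,
    ContinuousLinearMap.comp_apply, Complex.ofRealCLM_apply, ContinuousLinearMap.coe_snd',
    ContinuousLinearMap.coe_smul', Pi.smul_apply,
    ContinuousLinearMap.proj_apply, ContinuousLinearMap.coe_fst',
    LQ_apply_single, smul_eq_mul, Pi.single_eq_same, mul_zero, mul_one]
  have hQc : ((QQ y x : ℝ) : ℂ) ≠ 0 := Complex.ofReal_ne_zero.mpr hQ
  push_cast
  field_simp
  ring

theorem pd2_K0_e (hx : x.2 ≠ 0) :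
    ∃ G : ((Fin m → ℝ) × ℝ) →L[ℝ] ℂ,
      HasFDerivAt (pd ((0 : Fin m → ℝ), (1 : ℝ)) (K0 α β y)) G x ∧
      G ((0 : Fin m → ℝ), (1 : ℝ))
      = K0 α β y x * ((α / (x.2 : ℂ) + 2 * β * (x.2 : ℂ) / ((QQ y x : ℝ) : ℂ)) ^ 2
          - α / (x.2 : ℂ) ^ 2
          + 2 * β * ((((QQ y x : ℝ) : ℂ) - 2 * (x.2 : ℂ) ^ 2) / ((QQ y x : ℝ) : ℂ) ^ 2)) := by
  have hQ : QQ y x ≠ 0 := (QQ_pos y hx).ne'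
  set v : (Fin m → ℝ) × ℝ := ((0 : Fin m → ℝ), (1 : ℝ)) with hv
  set g : (Fin m → ℝ) × ℝ → ℂ := fun z =>
    K0 α β y z * (α * ((z.2⁻¹ : ℝ) : ℂ) + 2 * β * ((z.2 * (QQ y z)⁻¹ : ℝ) : ℂ)) with hg
  have heq : pd v (K0 α β y) =ᶠ[nhds x] g := by
    filter_upwards [isOpen_U.mem_nhds hx] with z hz
    simp only [hg]
    rw [pd_K0_e α β y hz]
    push_cast
    ring
  have hsnd : HasFDerivAt (fun z : (Fin m → ℝ) × ℝ => z.2)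
      (ContinuousLinearMap.snd ℝ (Fin m → ℝ) ℝ) x :=
    (ContinuousLinearMap.snd ℝ (Fin m → ℝ) ℝ).hasFDerivAt
  have hinvt : HasFDerivAt (fun z : (Fin m → ℝ) × ℝ => z.2⁻¹)
      ((-(x.2 ^ 2)⁻¹) • ContinuousLinearMap.snd ℝ (Fin m → ℝ) ℝ) x :=
    (hasDerivAt_inv hx).comp_hasFDerivAt x hsnd
  have hinvQ : HasFDerivAt (fun z : (Fin m → ℝ) × ℝ => (QQ y z)⁻¹)
      ((-((QQ y x) ^ 2)⁻¹) • LQ y x) x :=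
    (hasDerivAt_inv hQ).comp_hasFDerivAt x (hasFDerivAt_QQ y x)
  have hs := hsnd.mul hinvQ
  have hφ1 : HasFDerivAt (fun z : (Fin m → ℝ) × ℝ => α * ((z.2⁻¹ : ℝ) : ℂ))
      (α • (Complex.ofRealCLM.comp
        ((-(x.2 ^ 2)⁻¹) • ContinuousLinearMap.snd ℝ (Fin m → ℝ) ℝ))) x :=
    (Complex.ofRealCLM.hasFDerivAt.comp x hinvt).const_mul α
  have hφ2 : HasFDerivAt (fun z : (Fin m → ℝ) × ℝ => 2 * β * ((z.2 * (QQ y z)⁻¹ : ℝ) : ℂ))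
      ((2 * β) • (Complex.ofRealCLM.comp
        (x.2 • ((-((QQ y x) ^ 2)⁻¹) • LQ y x)
          + (QQ y x)⁻¹ • ContinuousLinearMap.snd ℝ (Fin m → ℝ) ℝ))) x :=
    (Complex.ofRealCLM.hasFDerivAt.comp x hs).const_mul (2 * β)
  have hgd := (hasFDerivAt_K0 α β y hx).fun_mul (hφ1.fun_add hφ2)
  refine ⟨_, hgd.congr_of_eventuallyEq heq, ?_⟩
  simp only [hv, DK0, ContinuousLinearMap.add_apply, ContinuousLinearMap.smul_apply,
    ContinuousLinearMap.comp_apply, Complex.ofRealCLM_apply, ContinuousLinearMap.coe_snd',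
    ContinuousLinearMap.coe_smul', Pi.smul_apply, LQ_apply_e, smul_eq_mul, mul_one]
  have hQc : ((QQ y x : ℝ) : ℂ) ≠ 0 := Complex.ofReal_ne_zero.mpr hQ
  have htc : ((x.2 : ℝ) : ℂ) ≠ 0 := Complex.ofReal_ne_zero.mpr hx
  push_cast
  field_simp [hQc, htc]
  ring

theorem deltaA_eq (a : ℝ) (C : ℂ) (K : (Fin m → ℝ) × ℝ → ℂ) {V : Set ((Fin m → ℝ) × ℝ)}
    (hV : IsOpen V) (hxV : x ∈ V) (hVne : ∀ z ∈ V, z.2 ≠ 0)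
    (hKV : ∀ z ∈ V, K z = C * K0 α β y z) :
    deltaA m a K x = C * (K0 α β y x *
      (α ^ 2 + ((a : ℂ) - 1) * α + ((x.2 : ℂ) ^ 2 / ((QQ y x : ℝ) : ℂ))
        * (4 * β ^ 2 + 2 * β * ((m : ℂ) + 2 * α + (a : ℂ) - 1)))) := by
  have hx : x.2 ≠ 0 := hVne x hxV
  have hQ : QQ y x ≠ 0 := (QQ_pos y hx).ne'
  have hQc : ((QQ y x : ℝ) : ℂ) ≠ 0 := Complex.ofReal_ne_zero.mpr hQ
  have htc : ((x.2 : ℝ) : ℂ) ≠ 0 := Complex.ofReal_ne_zero.mpr hx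
  -- first derivatives of K on V
  have hpdv : ∀ v : (Fin m → ℝ) × ℝ, ∀ z ∈ V, pd v K z = C * pd v (K0 α β y) z := by
    intro v z hz
    have h1 : HasFDerivAt (fun w => C * K0 α β y w) (C • DK0 α β y z) z :=
      (hasFDerivAt_K0 α β y (hVne z hz)).const_mul C
    have h2 : HasFDerivAt K (C • DK0 α β y z) z :=
      h1.congr_of_eventuallyEq (Filter.eventuallyEq_of_mem (hV.mem_nhds hz) hKV)
    rw [pd, h2.fderiv, pd, (hasFDerivAt_K0 α β y (hVne z hz)).fderiv]
    simp
  -- second derivatives of K at x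
  have hpd2 : ∀ v : (Fin m → ℝ) × ℝ,
      ∀ G : ((Fin m → ℝ) × ℝ) →L[ℝ] ℂ, HasFDerivAt (pd v (K0 α β y)) G x →
      pd v (pd v K) x = C * G v := by
    intro v G hG
    have heq : pd v K =ᶠ[nhds x] fun z => C * pd v (K0 α β y) z :=
      Filter.eventuallyEq_of_mem (hV.mem_nhds hxV) (hpdv v)
    have h1 : HasFDerivAt (fun z => C * pd v (K0 α β y) z) (C • G) x := hG.const_mul C
    have h2 : HasFDerivAt (pd v K) (C • G) x := h1.congr_of_eventuallyEq heq
    rw [pd, h2.fderiv]; simp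
  obtain ⟨Ge, hGe, hGeval⟩ := pd2_K0_e α β y hx
  have hsum : ∀ j : Fin m, pd (Pi.single j 1, (0 : ℝ)) (pd (Pi.single j 1, (0 : ℝ)) K) x
      = C * (K0 α β y x * ((4 * β ^ 2 * ((x.1 j - y j : ℝ) : ℂ) ^ 2
          + 2 * β * (((QQ y x : ℝ) : ℂ) - 2 * ((x.1 j - y j : ℝ) : ℂ) ^ 2))
            / ((QQ y x : ℝ) : ℂ) ^ 2)) := by
    intro j
    obtain ⟨G, hG, hGv⟩ := pd2_K0_single α β y hx j
    rw [hpd2 _ G hG, hGv]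
  have hRc : ((∑ j, (x.1 j - y j) ^ 2 : ℝ) : ℂ) = ∑ j, ((x.1 j - y j : ℝ) : ℂ) ^ 2 := by
    push_cast; rfl
  have hQR : ((QQ y x : ℝ) : ℂ) = ((∑ j, (x.1 j - y j) ^ 2 : ℝ) : ℂ) + (x.2 : ℂ) ^ 2 := by
    simp only [QQ]; push_cast; ring
  rw [deltaA]
  rw [Finset.sum_congr rfl (fun j _ => hsum j), hpd2 _ Ge hGe, hGeval,
    hpdv _ x hxV, pd_K0_e α β y hx]
  rw [← Finset.mul_sum, ← Finset.mul_sum, ← Finset.sum_div]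
  have hS : (∑ j, (4 * β ^ 2 * ((x.1 j - y j : ℝ) : ℂ) ^ 2
          + 2 * β * (((QQ y x : ℝ) : ℂ) - 2 * ((x.1 j - y j : ℝ) : ℂ) ^ 2)))
      = 4 * β ^ 2 * ((∑ j, (x.1 j - y j) ^ 2 : ℝ) : ℂ)
        + 2 * β * ((m : ℂ) * ((QQ y x : ℝ) : ℂ)
            - 2 * ((∑ j, (x.1 j - y j) ^ 2 : ℝ) : ℂ)) := by
    rw [hRc, Finset.sum_add_distrib, ← Finset.mul_sum, ← Finset.mul_sum,
      Finset.sum_sub_distrib, Finset.sum_const, ← Finset.mul_sum]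
    simp [nsmul_eq_mul]
  rw [hS]
  set S := ((∑ j, (x.1 j - y j) ^ 2 : ℝ) : ℂ) with hSdef
  have hSQ : S = ((QQ y x : ℝ) : ℂ) - (x.2 : ℂ) ^ 2 := by rw [hQR]; ring
  rw [hSQ]
  push_cast
  rw [div_add_div _ _ htc hQc, div_pow]
  field_simp
  ring

end Second

end Aux

/-- For every `x` with `x_n ≠ 0`, `Δ_a K(x) = −(((1−a)/2)² + ν²) K(x)`. -/
theorem statement6 (n : ℕ) (hn : 2 ≤ n) (a ν : ℝ) (ε : ℕ) (hε : ε = 0 ∨ ε = 1)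
    (y : Fin (n - 1) → ℝ) (x : (Fin (n - 1) → ℝ) × ℝ) (hx : x.2 ≠ 0) :
    deltaA (n - 1) a (kerKnu n a ν ε y) x
      = -(((((1 - a) / 2) ^ 2 + ν ^ 2 : ℝ)) : ℂ) * kerKnu n a ν ε y x := by
  classical
  -- abbreviations
  have hKV_gen : ∀ V : Set ((Fin (n-1) → ℝ) × ℝ), (∀ z ∈ V, Real.sign z.2 = Real.sign x.2) →
      ∀ z ∈ V, kerKnu n a ν ε y z
        = ((Real.sign x.2 ^ ε : ℝ) : ℂ) *
          K0 ((((1 - a) / 2 : ℝ) : ℂ) - (ν : ℂ) * Complex.I)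
            (-(((((n : ℝ) - 1) / 2 : ℝ)) : ℂ) + (ν : ℂ) * Complex.I) y z := by
    intro V hsig z hz
    simp only [kerKnu, K0, QQ]
    rw [Real.log_abs, hsig z hz]
    ring
  have key : ∀ V : Set ((Fin (n-1) → ℝ) × ℝ), IsOpen V → x ∈ V → (∀ z ∈ V, z.2 ≠ 0) →
      (∀ z ∈ V, Real.sign z.2 = Real.sign x.2) →
      deltaA (n - 1) a (kerKnu n a ν ε y) x
        = -(((((1 - a) / 2) ^ 2 + ν ^ 2 : ℝ)) : ℂ) * kerKnu n a ν ε y x := by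
    intro V hV hxV hVne hsig
    have hKV := hKV_gen V hsig
    have hmain := deltaA_eq ((((1 - a) / 2 : ℝ) : ℂ) - (ν : ℂ) * Complex.I)
      (-(((((n : ℝ) - 1) / 2 : ℝ)) : ℂ) + (ν : ℂ) * Complex.I) y a
      ((Real.sign x.2 ^ ε : ℝ) : ℂ) (kerKnu n a ν ε y) hV hxV hVne hKV
    rw [hmain, hKV x hxV]
    have hm : ((n - 1 : ℕ) : ℂ) = (n : ℂ) - 1 := by
      rw [Nat.cast_sub (by omega : 1 ≤ n)]; norm_num
    set α : ℂ := (((1 - a) / 2 : ℝ) : ℂ) - (ν : ℂ) * Complex.I with hα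
    set β : ℂ := -(((((n : ℝ) - 1) / 2 : ℝ)) : ℂ) + (ν : ℂ) * Complex.I with hβ
    have h0 : 4 * β ^ 2 + 2 * β * (((n - 1 : ℕ) : ℂ) + 2 * α + (a : ℂ) - 1) = 0 := by
      rw [hm, hα, hβ]; push_cast; ring
    rw [h0, mul_zero, add_zero]
    have h1 : α ^ 2 + ((a : ℂ) - 1) * α
        = -(((((1 - a) / 2) ^ 2 + ν ^ 2 : ℝ)) : ℂ) := by
      rw [hα]; push_cast
      linear_combination (ν : ℂ) ^ 2 * Complex.I_sq
    rw [h1]; ring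
  rcases lt_or_gt_of_ne hx with h | h
  · exact key {z | z.2 < 0} (isOpen_lt continuous_snd continuous_const) h
      (fun z hz => ne_of_lt hz)
      (fun z hz => by rw [Real.sign_of_neg hz, Real.sign_of_neg h])
  · exact key {z | 0 < z.2} (isOpen_lt continuous_const continuous_snd) h
      (fun z hz => ne_of_gt hz)
      (fun z hz => by rw [Real.sign_of_pos hz, Real.sign_of_pos h])
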